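/- Let n be a positive integer and consider the square matrix L indexed by pairs (i,j) with j | n and i | j, whose entry in row (i,j) and column (d,c) is φ(d)·n/lcm(j,c) if d | i, d | c and j | lcm(i,c), and 0 otherwise. Then det L = ∏_{(i,j)} φ(i)·n/j; in particular L is invertible. -/
import Mathlib


/-- The index set of pairs `(i,j)` with `j ∣ n` and `i ∣ j`. -/
def pairIndex (n : ℕ) : Finset (ℕ × ℕ) :=
  (n.divisors ×ˢ n.divisors).filter (fun p => p.1 ∣ p.2)

/-- The matrix `L` of the paper, with rows and columns indexed by pairs `(i,j)`
with `j ∣ n`, `i ∣ j`; the entry in row `(i,j)`, column `(d,c)` is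
`φ(d)·n/lcm(j,c)` if `d ∣ i`, `d ∣ c` and `j ∣ lcm(i,c)`, and `0` otherwise. -/
noncomputable def Lmat (n : ℕ) : Matrix (pairIndex n) (pairIndex n) ℚ :=
  fun r c =>
    if (c.1.1 ∣ r.1.1) ∧ (c.1.1 ∣ c.1.2) ∧ (r.1.2 ∣ Nat.lcm r.1.1 c.1.2) then
      (Nat.totient c.1.1 : ℚ) * n / (Nat.lcm r.1.2 c.1.2 : ℚ)
    else 0

lemma mem_pairIndex' {n : ℕ} {p : ℕ × ℕ} (h : p ∈ pairIndex n) :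
    p.1 ∣ p.2 ∧ p.2 ∣ n ∧ 0 < p.1 ∧ 0 < p.2 ∧ p.1 ≤ n ∧ p.2 ≤ n := by
  simp only [pairIndex, Finset.mem_filter, Finset.mem_product, Nat.mem_divisors] at h
  obtain ⟨⟨⟨h1, hn0⟩, h2, _⟩, h3⟩ := h
  have hp1 : 0 < p.1 := Nat.pos_of_ne_zero (fun e => hn0 (by simpa [e] using h1))
  have hp2 : 0 < p.2 := Nat.pos_of_ne_zero (fun e => hn0 (by simpa [e] using h2))
  exact ⟨h3, h2, hp1, hp2, Nat.le_of_dvd (Nat.pos_of_ne_zero hn0) h1,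
    Nat.le_of_dvd (Nat.pos_of_ne_zero hn0) h2⟩

/-- The key function used to order `pairIndex n`. -/
def pairKey (n : ℕ) (p : pairIndex n) : ℕ := p.1.1 * (n + 1) + (n - p.1.2)

lemma keyArith {n a b c d : ℕ} (hb : b ≤ n) (hd : d ≤ n)
    (h : a * (n + 1) + (n - b) = c * (n + 1) + (n - d)) : a = c ∧ b = d := by
  have h1 : (a * (n + 1) + (n - b)) / (n + 1) = a := by
    rw [Nat.add_comm, Nat.add_mul_div_right _ _ (Nat.succ_pos n),
      Nat.div_eq_of_lt (by omega), Nat.zero_add]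
  have h2 : (c * (n + 1) + (n - d)) / (n + 1) = c := by
    rw [Nat.add_comm, Nat.add_mul_div_right _ _ (Nat.succ_pos n),
      Nat.div_eq_of_lt (by omega), Nat.zero_add]
  have hac : a = c := by rw [← h1, h, h2]
  have hmul : a * (n + 1) = c * (n + 1) := by rw [hac]
  exact ⟨hac, by omega⟩

lemma pairKey_injective (n : ℕ) : Function.Injective (pairKey n) := by
  intro p q h
  obtain ⟨_, _, _, _, hp1, hp2⟩ := mem_pairIndex' p.2
  obtain ⟨_, _, _, _, hq1, hq2⟩ := mem_pairIndex' q.2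
  obtain ⟨h1, h2⟩ := keyArith hp2 hq2 h
  exact Subtype.ext (Prod.ext h1 h2)

/-- `det L = ∏_{(i,j)} φ(i)·n/j`; in particular `L` is invertible. -/
theorem stmt12 (n : ℕ) (hn : 0 < n) :
    ((Lmat n).det = ∏ p : pairIndex n, (Nat.totient p.1.1 : ℚ) * n / (p.1.2 : ℚ)) ∧
    IsUnit (Lmat n).det := by
  classical
  set b : pairIndex n → ℕᵒᵈ := fun p => OrderDual.toDual (pairKey n p) with hb
  have hbinj : Function.Injective b := fun p q h =>
    pairKey_injective n (OrderDual.toDual.injective h)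
  have htri : (Lmat n).BlockTriangular b := by
    intro r c hlt
    have hlt' : pairKey n r < pairKey n c := hlt
    unfold Lmat
    rw [if_neg]
    rintro ⟨hdi, hdc, hjl⟩
    obtain ⟨hij, hjn, hi0, hj0, hi1, hj1⟩ := mem_pairIndex' r.2
    obtain ⟨_, hcn, hd0, hc0, hd1, hc1⟩ := mem_pairIndex' c.2
    have hdle : c.1.1 ≤ r.1.1 := Nat.le_of_dvd hi0 hdi
    unfold pairKey at hlt'
    rcases eq_or_lt_of_le hdle with heq | hlt2
    · -- d = i, then i ∣ cc so j ∣ cc so j ≤ cc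
      have hicc : r.1.1 ∣ c.1.2 := heq ▸ hdc
      have hjcc : r.1.2 ∣ c.1.2 := hjl.trans (Nat.lcm_dvd hicc dvd_rfl)
      have hle : r.1.2 ≤ c.1.2 := Nat.le_of_dvd hc0 hjcc
      have hmul : c.1.1 * (n + 1) = r.1.1 * (n + 1) := by rw [heq]
      omega
    · have e1 : (c.1.1 + 1) * (n + 1) = c.1.1 * (n + 1) + (n + 1) := by ring
      have le1 : (c.1.1 + 1) * (n + 1) ≤ r.1.1 * (n + 1) :=
        Nat.mul_le_mul_right _ (by omega)
      omega
  have hdet := htri.det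
  have hblock : ∀ p : pairIndex n,
      ((Lmat n).toSquareBlock b (b p)).det = Lmat n p p := by
    intro p
    haveI : Unique { a // b a = b p } :=
      ⟨⟨⟨p, rfl⟩⟩, fun q => Subtype.ext (hbinj q.2)⟩
    rw [Matrix.det_unique]
    simp only [Matrix.toSquareBlock_def, Matrix.of_apply]
    have hd : (default : { a // b a = b p }) = ⟨p, rfl⟩ := Subsingleton.elim _ _
    rw [hd]
  have himg : (Finset.univ.image b) = Finset.univ.image b := rfl
  have hprod : (Lmat n).det = ∏ p : pairIndex n, Lmat n p p := by
    rw [hdet, Finset.prod_image (fun x _ y _ h => hbinj h)]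
    exact Finset.prod_congr rfl fun p _ => hblock p
  have hdiag : ∀ p : pairIndex n,
      Lmat n p p = (Nat.totient p.1.1 : ℚ) * n / (p.1.2 : ℚ) := by
    intro p
    obtain ⟨hij, hjn, hi0, hj0, _, _⟩ := mem_pairIndex' p.2
    unfold Lmat
    rw [if_pos ⟨dvd_refl _, hij, Nat.dvd_lcm_right _ _⟩, Nat.lcm_self]
  have hmain : (Lmat n).det = ∏ p : pairIndex n, (Nat.totient p.1.1 : ℚ) * n / (p.1.2 : ℚ) := by
    rw [hprod]
    exact Finset.prod_congr rfl fun p _ => hdiag p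
  refine ⟨hmain, ?_⟩
  rw [hmain, isUnit_iff_ne_zero]
  apply Finset.prod_ne_zero_iff.mpr
  intro p _
  obtain ⟨hij, hjn, hi0, hj0, _, _⟩ := mem_pairIndex' p.2
  have h1 : (Nat.totient p.1.1 : ℚ) ≠ 0 := by
    exact_mod_cast (Nat.totient_pos.mpr hi0).ne'
  have h2 : (n : ℚ) ≠ 0 := by exact_mod_cast hn.ne'
  have h3 : (p.1.2 : ℚ) ≠ 0 := by exact_mod_cast hj0.ne'
  exact div_ne_zero (mul_ne_zero h1 h2) h3
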